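/- Let m ≥ 1, r, s ≥ 1 and p_k, q_k ∈ [1,∞) with q_k ≥ p_k for all k and 1/r − ∑_k 1/p_k + ∑_k 1/q_k > 0, and define s by 1/s = 1/r − ∑_k 1/p_k + ∑_k 1/q_k. Then every multiple (r; p₁,…,p_m)-summing m-linear operator T : X₁ × ⋯ × X_m → Y is multiple (s; q₁,…,q_m)-summing. -/

import Mathlib

open scoped BigOperators

/-- The weak ℓ^p norm of a finite family in a normed space:
`sup_{φ ∈ B_{X'}} (∑ j |φ(x_j)|^p)^(1/p)`. -/
noncomputable def weakNorm {X : Type*} [NormedAddCommGroup X] [NormedSpace ℝ X]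
    {n : ℕ} (x : Fin n → X) (p : ℝ) : ℝ :=
  ⨆ φ : {φ : X →L[ℝ] ℝ // ‖φ‖ ≤ 1}, (∑ j, |φ.1 (x j)| ^ p) ^ (1 / p)

section helpers

variable {X : Type*} [NormedAddCommGroup X] [NormedSpace ℝ X] {n : ℕ}

instance : Nonempty {φ : X →L[ℝ] ℝ // ‖φ‖ ≤ 1} := ⟨⟨0, by simp⟩⟩

lemma weakNorm_nonneg (x : Fin n → X) (p : ℝ) : 0 ≤ weakNorm x p :=
  Real.iSup_nonneg fun φ => Real.rpow_nonneg
    (Finset.sum_nonneg fun j _ => Real.rpow_nonneg (abs_nonneg _) _) _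

lemma weakNorm_bdd (x : Fin n → X) (p : ℝ) (hp : 0 ≤ p) :
    BddAbove (Set.range fun φ : {φ : X →L[ℝ] ℝ // ‖φ‖ ≤ 1} =>
      (∑ j, |φ.1 (x j)| ^ p) ^ (1 / p)) := by
  refine ⟨(∑ j, ‖x j‖ ^ p) ^ (1 / p), ?_⟩
  rintro a ⟨⟨φ, hφ⟩, rfl⟩
  refine Real.rpow_le_rpow (Finset.sum_nonneg fun j _ =>
    Real.rpow_nonneg (abs_nonneg _) _) (Finset.sum_le_sum fun j _ => ?_) (by positivity)
  refine Real.rpow_le_rpow (abs_nonneg _) ?_ hp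
  calc |φ (x j)| = ‖φ (x j)‖ := rfl
    _ ≤ ‖φ‖ * ‖x j‖ := φ.le_opNorm _
    _ ≤ 1 * ‖x j‖ := by gcongr
    _ = ‖x j‖ := one_mul _

lemma le_weakNorm (x : Fin n → X) (p : ℝ) (hp : 0 ≤ p) (φ : X →L[ℝ] ℝ) (hφ : ‖φ‖ ≤ 1) :
    (∑ j, |φ (x j)| ^ p) ^ (1 / p) ≤ weakNorm x p :=
  le_ciSup (weakNorm_bdd x p hp) (⟨φ, hφ⟩ : {φ : X →L[ℝ] ℝ // ‖φ‖ ≤ 1})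

lemma weakNorm_le (x : Fin n → X) (p : ℝ) {B : ℝ}
    (h : ∀ φ : X →L[ℝ] ℝ, ‖φ‖ ≤ 1 → (∑ j, |φ (x j)| ^ p) ^ (1 / p) ≤ B) :
    weakNorm x p ≤ B :=
  ciSup_le fun φ => h φ.1 φ.2

end helpers

lemma sum_rpow_le_rpow_sum' {ι : Type*} (s : Finset ι) (f : ι → ℝ) {θ : ℝ}
    (hθ : 1 ≤ θ) (hf : ∀ i ∈ s, 0 ≤ f i) :
    ∑ i ∈ s, f i ^ θ ≤ (∑ i ∈ s, f i) ^ θ := by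
  classical
  induction s using Finset.induction with
  | empty => simp [Real.zero_rpow (by positivity : θ ≠ 0)]
  | @insert a s ha ih =>
    rw [Finset.sum_insert ha, Finset.sum_insert ha]
    have hfa : 0 ≤ f a := hf a (Finset.mem_insert_self a s)
    have hfs : 0 ≤ ∑ i ∈ s, f i :=
      Finset.sum_nonneg fun i hi => hf i (Finset.mem_insert_of_mem hi)
    calc f a ^ θ + ∑ i ∈ s, f i ^ θ ≤ f a ^ θ + (∑ i ∈ s, f i) ^ θ := by
          gcongr
          exact ih fun i hi => hf i (Finset.mem_insert_of_mem hi)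
      _ ≤ (f a + ∑ i ∈ s, f i) ^ θ := by
          have := NNReal.add_rpow_le_rpow_add (⟨f a, hfa⟩ : NNReal) ⟨_, hfs⟩ hθ
          have h2 := NNReal.coe_le_coe.2 this
          push_cast at h2
          exact h2

section helpers2
variable {X : Type*} [NormedAddCommGroup X] [NormedSpace ℝ X] {n : ℕ}
lemma weakNorm_smul_le (x : Fin n → X) (lam : Fin n → ℝ)
    (hlam : ∀ j, 0 ≤ lam j) (p' q' u : ℝ) (hp' : 1 ≤ p') (hq' : p' < q')
    (hu : 1 / u = 1 / p' - 1 / q') (hlamu : ∑ j, lam j ^ u ≤ 1) :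
    weakNorm (fun j => lam j • x j) p' ≤ weakNorm x q' := by
  have hp'0 : 0 < p' := lt_of_lt_of_le one_pos hp'
  have hq'0 : 0 < q' := lt_trans hp'0 hq'
  have hu0 : 0 < 1 / u := by
    rw [hu, sub_pos]; exact one_div_lt_one_div_of_lt hp'0 hq'
  have hupos : 0 < u := one_div_pos.mp hu0
  have hp'u : p' < u := by
    have h1 : 1 / u < 1 / p' := by
      rw [hu]; have : 0 < 1 / q' := by positivity
      linarith
    exact lt_of_one_div_lt_one_div hupos h1
  have hconj : Real.HolderConjugate (u / p') (q' / p') := by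
    rw [Real.holderConjugate_iff]
    constructor
    · rw [lt_div_iff₀ hp'0, one_mul]; exact hp'u
    · rw [inv_div, inv_div, div_eq_mul_one_div p' u, div_eq_mul_one_div p' q', ← mul_add]
      have h1 : 1 / u + 1 / q' = 1 / p' := by rw [hu]; ring
      rw [h1, mul_one_div, div_self (ne_of_gt hp'0)]
  rw [weakNorm]
  apply ciSup_le
  rintro ⟨φ, hφ⟩
  simp only
  have habs : ∀ j : Fin n, |φ (lam j • x j)| ^ p' = lam j ^ p' * |φ (x j)| ^ p' := by
    intro j
    rw [map_smul, smul_eq_mul, abs_mul, abs_of_nonneg (hlam j),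
      Real.mul_rpow (hlam j) (abs_nonneg _)]
  have holder := Real.inner_le_Lp_mul_Lq (Finset.univ) (fun j => lam j ^ p')
    (fun j : Fin n => |φ (x j)| ^ p') hconj
  have e1 : ∀ j : Fin n, |lam j ^ p'| ^ (u / p') = lam j ^ u := by
    intro j
    rw [abs_of_nonneg (Real.rpow_nonneg (hlam j) _), ← Real.rpow_mul (hlam j)]
    congr 1
    field_simp
  have e2 : ∀ j : Fin n, |(|φ (x j)| ^ p')| ^ (q' / p') = |φ (x j)| ^ q' := by
    intro j
    rw [abs_of_nonneg (Real.rpow_nonneg (abs_nonneg _) _), ← Real.rpow_mul (abs_nonneg _)]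
    congr 1
    field_simp
  rw [Finset.sum_congr rfl fun j _ => e1 j, Finset.sum_congr rfl fun j _ => e2 j,
    one_div_div, one_div_div] at holder
  have hL : 0 ≤ ∑ j : Fin n, |φ (lam j • x j)| ^ p' :=
    Finset.sum_nonneg fun j _ => Real.rpow_nonneg (abs_nonneg _) _
  have hlamsum : 0 ≤ ∑ j : Fin n, lam j ^ u :=
    Finset.sum_nonneg fun j _ => Real.rpow_nonneg (hlam j) _
  have hgsum : 0 ≤ ∑ j : Fin n, |φ (x j)| ^ q' :=
    Finset.sum_nonneg fun j _ => Real.rpow_nonneg (abs_nonneg _) _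
  calc (∑ j : Fin n, |φ (lam j • x j)| ^ p') ^ (1 / p')
      ≤ ((∑ j : Fin n, lam j ^ u) ^ (p' / u) *
          (∑ j : Fin n, |φ (x j)| ^ q') ^ (p' / q')) ^ (1 / p') := by
        refine Real.rpow_le_rpow hL ?_ (by positivity)
        calc ∑ j : Fin n, |φ (lam j • x j)| ^ p'
            = ∑ j : Fin n, lam j ^ p' * |φ (x j)| ^ p' :=
              Finset.sum_congr rfl fun j _ => habs j
          _ ≤ _ := holder
    _ = (∑ j : Fin n, lam j ^ u) ^ (1 / u) *
          (∑ j : Fin n, |φ (x j)| ^ q') ^ (1 / q') := by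
        rw [Real.mul_rpow (Real.rpow_nonneg hlamsum _) (Real.rpow_nonneg hgsum _),
          ← Real.rpow_mul hlamsum, ← Real.rpow_mul hgsum]
        congr 2 <;> field_simp <;> ring
    _ ≤ 1 * weakNorm x q' := by
        refine mul_le_mul ?_ (le_weakNorm x q' (le_of_lt hq'0) φ hφ)
          (Real.rpow_nonneg hgsum _) one_pos.le
        exact Real.rpow_le_one hlamsum hlamu hu0.le
    _ = weakNorm x q' := one_mul _

end helpers2

lemma bayart_step {m : ℕ}
    {X : Fin m → Type*} [∀ k, NormedAddCommGroup (X k)] [∀ k, NormedSpace ℝ (X k)]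
    {Y : Type*} [NormedAddCommGroup Y] [NormedSpace ℝ Y]
    (T : ContinuousMultilinearMap ℝ X Y)
    (t t' : ℝ) (P : Fin m → ℝ) (i : Fin m) (q' : ℝ)
    (ht : 0 < t) (hP : ∀ k, 1 ≤ P k) (hq' : P i < q')
    (ht' : 1 / t' = 1 / t - (1 / P i - 1 / q'))
    (ht'pos : 0 < 1 / t')
    (C : ℝ) (hC : 0 ≤ C)
    (hT : ∀ (n : Fin m → ℕ) (x : ∀ k, Fin (n k) → X k),
      (∑ j : ∀ k, Fin (n k), ‖T (fun k => x k (j k))‖ ^ t) ^ (1 / t) ≤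
        C * ∏ k, weakNorm (x k) (P k)) :
    ∀ (n : Fin m → ℕ) (x : ∀ k, Fin (n k) → X k),
      (∑ j : ∀ k, Fin (n k), ‖T (fun k => x k (j k))‖ ^ t') ^ (1 / t') ≤
        C * ∏ k, weakNorm (x k) (Function.update P i q' k) := by
  classical
  intro n x
  set b : (∀ k, Fin (n k)) → ℝ := fun j => ‖T (fun k => x k (j k))‖ with hbdef
  have hb : ∀ j, 0 ≤ b j := fun j => norm_nonneg _
  -- numerics
  have hPi : 1 ≤ P i := hP i
  have hPi0 : 0 < P i := lt_of_lt_of_le one_pos hPi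
  have hq'0 : 0 < q' := lt_trans hPi0 hq'
  have hiu : 0 < 1 / P i - 1 / q' := sub_pos.2 (one_div_lt_one_div_of_lt hPi0 hq')
  set u : ℝ := (1 / P i - 1 / q')⁻¹ with hudef
  have hu : 1 / u = 1 / P i - 1 / q' := by rw [hudef, one_div, inv_inv]
  have hupos : 0 < u := by rw [hudef]; exact inv_pos.2 hiu
  have ht'p : 0 < t' := one_div_pos.mp ht'pos
  have htt' : t ≤ t' := by
    have hu1 : 0 < 1 / u := by positivity
    have h1 : 1 / t' ≤ 1 / t := by rw [ht', ← hu]; linarith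
    exact le_of_one_div_le_one_div ht'p h1
  have hθ : 1 ≤ t' / t := (one_le_div ht).2 htt'
  have h1t : 1 / t = 1 / t' + 1 / u := by rw [ht', hu]; ring
  have hkey : t' * u = t * u + t * t' := by
    have h := h1t
    field_simp at h
    linarith
  -- the fiber norms
  set A : Fin (n i) → ℝ :=
    fun j1 => (∑ j : ∀ k, Fin (n k), if j i = j1 then b j ^ t else 0) ^ (1 / t) with hAdef
  have hAsum : ∀ j1, 0 ≤ ∑ j : ∀ k, Fin (n k), if j i = j1 then b j ^ t else 0 :=
    fun j1 => Finset.sum_nonneg fun j _ => by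
      split
      · exact Real.rpow_nonneg (hb j) _
      · exact le_rfl
  have hA : ∀ j1, 0 ≤ A j1 := fun j1 => Real.rpow_nonneg (hAsum j1) _
  have hAt : ∀ j1, A j1 ^ t = ∑ j : ∀ k, Fin (n k), if j i = j1 then b j ^ t else 0 := by
    intro j1
    rw [hAdef, ← Real.rpow_mul (hAsum j1), one_div_mul_cancel (ne_of_gt ht), Real.rpow_one]
  set S : ℝ := ∑ j1, A j1 ^ t' with hSdef
  have hS0 : 0 ≤ S := Finset.sum_nonneg fun j1 _ => Real.rpow_nonneg (hA j1) _
  -- key1 : ∑ b^t' ≤ S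
  have key1 : ∑ j : ∀ k, Fin (n k), b j ^ t' ≤ S := by
    have fib : ∀ j1, (∑ j : ∀ k, Fin (n k), if j i = j1 then b j ^ t' else 0) ≤ A j1 ^ t' := by
      intro j1
      have e : A j1 ^ t' = (∑ j : ∀ k, Fin (n k), if j i = j1 then b j ^ t else 0) ^ (t' / t) := by
        rw [hAdef, ← Real.rpow_mul (hAsum j1)]
        congr 1
        field_simp
      rw [e]
      have e2 : ∀ j : ∀ k, Fin (n k),
          (if j i = j1 then b j ^ t' else 0) = (if j i = j1 then b j ^ t else 0) ^ (t' / t) := by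
        intro j
        split
        · rw [← Real.rpow_mul (hb j)]
          congr 1
          field_simp
        · rw [Real.zero_rpow (by positivity)]
      rw [Finset.sum_congr rfl fun j _ => e2 j]
      refine sum_rpow_le_rpow_sum' _ _ hθ fun j _ => ?_
      split
      · exact Real.rpow_nonneg (hb j) _
      · exact le_rfl
    calc ∑ j : ∀ k, Fin (n k), b j ^ t'
        = ∑ j : ∀ k, Fin (n k), ∑ j1, if j i = j1 then b j ^ t' else 0 := by
          refine Finset.sum_congr rfl fun j _ => ?_
          rw [Finset.sum_ite_eq]
          simp
      _ = ∑ j1, ∑ j : ∀ k, Fin (n k), if j i = j1 then b j ^ t' else 0 := Finset.sum_comm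
      _ ≤ ∑ j1, A j1 ^ t' := Finset.sum_le_sum fun j1 _ => fib j1
  have hRHS0 : 0 ≤ C * ∏ k, weakNorm (x k) (Function.update P i q' k) :=
    mul_nonneg hC (Finset.prod_nonneg fun k _ => weakNorm_nonneg _ _)
  by_cases hS : S = 0
  · -- degenerate case
    have hsum0 : ∑ j : ∀ k, Fin (n k), b j ^ t' = 0 :=
      le_antisymm (hS ▸ key1) (Finset.sum_nonneg fun j _ => Real.rpow_nonneg (hb j) _)
    rw [hbdef] at hsum0
    rw [hsum0, Real.zero_rpow (by positivity)]
    exact hRHS0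
  have hSpos : 0 < S := lt_of_le_of_ne hS0 (Ne.symm hS)
  -- the weights
  set lam : Fin (n i) → ℝ := fun j1 => A j1 ^ (t' / u) / S ^ (1 / u) with hlamdef
  have hlam : ∀ j1, 0 ≤ lam j1 := fun j1 =>
    div_nonneg (Real.rpow_nonneg (hA j1) _) (Real.rpow_nonneg hS0 _)
  have hlamu : ∑ j1, lam j1 ^ u = 1 := by
    have e : ∀ j1, lam j1 ^ u = A j1 ^ t' / S := by
      intro j1
      rw [hlamdef]
      rw [Real.div_rpow (Real.rpow_nonneg (hA j1) _) (Real.rpow_nonneg hS0 _),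
        ← Real.rpow_mul (hA j1), ← Real.rpow_mul hS0,
        div_mul_cancel₀ _ (ne_of_gt hupos), one_div_mul_cancel (ne_of_gt hupos), Real.rpow_one]
    rw [Finset.sum_congr rfl fun j1 _ => e j1, ← Finset.sum_div, ← hSdef, div_self hS]
  -- the scaled family
  set x' : ∀ k, Fin (n k) → X k :=
    Function.update x i (fun j1 => lam j1 • x i j1) with hx'def
  have hnorm : ∀ j : ∀ k, Fin (n k), ‖T (fun k => x' k (j k))‖ = lam (j i) * b j := by
    intro j
    have e : (fun k => x' k (j k)) =
        Function.update (fun k => x k (j k)) i (lam (j i) • x i (j i)) := by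
      funext k
      rcases eq_or_ne k i with rfl | hk
      · rw [hx'def]; simp
      · rw [hx'def]
        simp only [Function.update_of_ne hk]
    rw [e, ContinuousMultilinearMap.map_update_smul]
    have e2 : Function.update (fun k => x k (j k)) i (x i (j i)) = fun k => x k (j k) :=
      Function.update_eq_self i _
    rw [e2, norm_smul, Real.norm_eq_abs, abs_of_nonneg (hlam (j i))]
  -- the main computation
  have hsum : ∑ j : ∀ k, Fin (n k), ‖T (fun k => x' k (j k))‖ ^ t = S ^ (t / t') := by
    have e3 : t' / u * t + t = t' := by
      field_simp
      linarith [hkey]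
    have e5 : 1 - t / u = t / t' := by
      field_simp
      linarith [hkey]
    have c2 : ∀ j1, lam j1 ^ t * A j1 ^ t = A j1 ^ t' / S ^ (t / u) := by
      intro j1
      rw [hlamdef]
      rw [Real.div_rpow (Real.rpow_nonneg (hA j1) _) (Real.rpow_nonneg hS0 _),
        ← Real.rpow_mul (hA j1), ← Real.rpow_mul hS0, div_mul_eq_mul_div,
        ← Real.rpow_add' (hA j1) (by rw [e3]; exact ne_of_gt ht'p), e3]
      congr 2
      field_simp
    calc ∑ j : ∀ k, Fin (n k), ‖T (fun k => x' k (j k))‖ ^ t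
        = ∑ j : ∀ k, Fin (n k), lam (j i) ^ t * b j ^ t := by
          refine Finset.sum_congr rfl fun j _ => ?_
          rw [hnorm j, Real.mul_rpow (hlam (j i)) (hb j)]
      _ = ∑ j : ∀ k, Fin (n k), ∑ j1, if j i = j1 then lam j1 ^ t * b j ^ t else 0 := by
          refine Finset.sum_congr rfl fun j _ => ?_
          rw [Finset.sum_ite_eq]
          simp
      _ = ∑ j1, ∑ j : ∀ k, Fin (n k), if j i = j1 then lam j1 ^ t * b j ^ t else 0 :=
          Finset.sum_comm
      _ = ∑ j1, lam j1 ^ t * A j1 ^ t := by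
          refine Finset.sum_congr rfl fun j1 _ => ?_
          rw [hAt j1, Finset.mul_sum]
          refine Finset.sum_congr rfl fun j _ => ?_
          split <;> simp
      _ = ∑ j1, A j1 ^ t' / S ^ (t / u) := Finset.sum_congr rfl fun j1 _ => c2 j1
      _ = S / S ^ (t / u) := by rw [← Finset.sum_div, ← hSdef]
      _ = S ^ (t / t') := by
          have ed : S / S ^ (t / u) = S ^ (1 - t / u) := by
            rw [Real.rpow_sub hSpos, Real.rpow_one]
          rw [ed, e5]
  have happly := hT n x'
  rw [hsum] at happly
  have e6 : (S ^ (t / t')) ^ (1 / t) = S ^ (1 / t') := by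
    rw [← Real.rpow_mul hS0]
    congr 1
    field_simp
  rw [e6] at happly
  have hprod : ∏ k, weakNorm (x' k) (P k) ≤
      ∏ k, weakNorm (x k) (Function.update P i q' k) := by
    refine Finset.prod_le_prod (fun k _ => weakNorm_nonneg _ _) (fun k _ => ?_)
    rcases eq_or_ne k i with rfl | hk
    · rw [hx'def]
      simp only [Function.update_self]
      exact weakNorm_smul_le (x k) lam hlam (P k) q' u hPi hq' hu (le_of_eq hlamu)
    · rw [hx'def]
      simp only [Function.update_of_ne hk]
      exact le_rfl
  calc (∑ j : ∀ k, Fin (n k), b j ^ t') ^ (1 / t')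
      ≤ S ^ (1 / t') := Real.rpow_le_rpow
        (Finset.sum_nonneg fun j _ => Real.rpow_nonneg (hb j) _) key1 ht'pos.le
    _ ≤ C * ∏ k, weakNorm (x' k) (P k) := happly
    _ ≤ C * ∏ k, weakNorm (x k) (Function.update P i q' k) :=
        mul_le_mul_of_nonneg_left hprod hC

/-- **Bayart's inclusion theorem for multiple summing operators.**
If `q_k ≥ p_k`, `1/r − ∑ 1/p_k + ∑ 1/q_k > 0` and `1/s = 1/r − ∑ 1/p_k + ∑ 1/q_k`,
then every multiple `(r; p₁,…,p_m)`-summing operator is multiple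
`(s; q₁,…,q_m)`-summing. -/
theorem bayart_inclusion
    (m : ℕ) (hm : 0 < m)
    {X : Fin m → Type*} [∀ k, NormedAddCommGroup (X k)] [∀ k, NormedSpace ℝ (X k)]
    [∀ k, CompleteSpace (X k)]
    {Y : Type*} [NormedAddCommGroup Y] [NormedSpace ℝ Y] [CompleteSpace Y]
    (T : ContinuousMultilinearMap ℝ X Y)
    (r s : ℝ) (p q : Fin m → ℝ) (hr : 1 ≤ r) (hs : 1 ≤ s)
    (hp : ∀ k, 1 ≤ p k) (hpq : ∀ k, p k ≤ q k)
    (hpos : 0 < 1 / r - ∑ k, 1 / p k + ∑ k, 1 / q k)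
    (hsdef : 1 / s = 1 / r - ∑ k, 1 / p k + ∑ k, 1 / q k)
    (C : ℝ) (hC : 0 ≤ C)
    (hT : ∀ (n : Fin m → ℕ) (x : ∀ k, Fin (n k) → X k),
      (∑ j : ∀ k, Fin (n k), ‖T (fun k => x k (j k))‖ ^ r) ^ (1 / r) ≤
        C * ∏ k, weakNorm (x k) (p k)) :
    ∃ D : ℝ, 0 ≤ D ∧ ∀ (n : Fin m → ℕ) (x : ∀ k, Fin (n k) → X k),
      (∑ j : ∀ k, Fin (n k), ‖T (fun k => x k (j k))‖ ^ s) ^ (1 / s) ≤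
        D * ∏ k, weakNorm (x k) (q k) := by
  classical
  have hr0 : 0 < r := lt_of_lt_of_le one_pos hr
  have hs0 : 0 < s := lt_of_lt_of_le one_pos hs
  have hq1 : ∀ k, 1 ≤ q k := fun k => le_trans (hp k) (hpq k)
  have hterm : ∀ k : Fin m, 0 ≤ 1 / p k - 1 / q k := fun k =>
    sub_nonneg.2 (one_div_le_one_div_of_le (lt_of_lt_of_le one_pos (hp k)) (hpq k))
  set σ : ℕ → ℝ := fun i =>
    1 / r - ∑ k ∈ Finset.univ.filter (fun k : Fin m => (k : ℕ) < i), (1 / p k - 1 / q k)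
    with hσdef
  set t : ℕ → ℝ := fun i => (σ i)⁻¹ with htdef
  set P : ℕ → Fin m → ℝ := fun i k => if (k : ℕ) < i then q k else p k with hPdef
  have hσm : σ m = 1 / s := by
    rw [hσdef]
    simp only
    have hf : Finset.univ.filter (fun k : Fin m => (k : ℕ) < m) = Finset.univ := by
      apply Finset.filter_true_of_mem
      intro k _
      exact k.2
    rw [hf, Finset.sum_sub_distrib, hsdef]
    ring
  have hσpos : ∀ i, 0 < σ i := by
    intro i
    have hsub : ∑ k ∈ Finset.univ.filter (fun k : Fin m => (k : ℕ) < i), (1 / p k - 1 / q k)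
        ≤ ∑ k : Fin m, (1 / p k - 1 / q k) :=
      Finset.sum_le_sum_of_subset_of_nonneg (Finset.filter_subset _ _)
        (fun k _ _ => hterm k)
    have h2 : 0 < 1 / r - ∑ k : Fin m, (1 / p k - 1 / q k) := by
      rw [Finset.sum_sub_distrib]
      linarith
    rw [hσdef]
    simp only
    linarith
  have h1t : ∀ i, 1 / t i = σ i := by
    intro i
    rw [htdef, one_div, inv_inv]
  have hσ0 : σ 0 = 1 / r := by
    rw [hσdef]
    simp
  have hP1 : ∀ i k, 1 ≤ P i k := by
    intro i k
    rw [hPdef]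
    dsimp only
    split
    · exact hq1 k
    · exact hp k
  have hsumstep : ∀ (i : ℕ) (hi : i < m),
      σ (i + 1) = σ i - (1 / p ⟨i, hi⟩ - 1 / q ⟨i, hi⟩) := by
    intro i hi
    have hset : Finset.univ.filter (fun k : Fin m => (k : ℕ) < i + 1)
        = insert (⟨i, hi⟩ : Fin m) (Finset.univ.filter (fun k : Fin m => (k : ℕ) < i)) := by
      ext k
      simp only [Finset.mem_filter, Finset.mem_univ, true_and, Finset.mem_insert, Fin.ext_iff]
      omega
    have hnotmem : (⟨i, hi⟩ : Fin m) ∉ Finset.univ.filter (fun k : Fin m => (k : ℕ) < i) := by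
      simp
    rw [hσdef]
    simp only
    rw [hset, Finset.sum_insert hnotmem]
    ring
  -- the induction
  have main : ∀ i, i ≤ m → ∀ (n : Fin m → ℕ) (x : ∀ k, Fin (n k) → X k),
      (∑ j : ∀ k, Fin (n k), ‖T (fun k => x k (j k))‖ ^ (t i)) ^ (1 / t i) ≤
        C * ∏ k, weakNorm (x k) (P i k) := by
    intro i
    induction i with
    | zero =>
      intro _ n x
      have ht0 : t 0 = r := by
        rw [htdef]
        simp only
        rw [hσ0, one_div, inv_inv]
      have hP0 : P 0 = p := by
        funext k
        rw [hPdef]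
        simp
      rw [ht0, hP0]
      exact hT n x
    | succ i ih =>
      intro hi1
      have him : i < m := hi1
      have hile : i ≤ m := le_of_lt him
      set i' : Fin m := ⟨i, him⟩ with hi'def
      have hPii' : P i i' = p i' := by
        rw [hPdef]
        simp [hi'def]
      have hPsucc : Function.update (P i) i' (q i') = P (i + 1) := by
        funext k
        rcases eq_or_ne k i' with rfl | hk
        · rw [Function.update_self, hPdef]
          simp [hi'def]
        · rw [Function.update_of_ne hk, hPdef]
          have hki : (k : ℕ) ≠ i := fun h => hk (Fin.ext h)
          simp only
          congr 1
          · simp only [eq_iff_iff]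
            omega
      rcases eq_or_lt_of_le (hpq i') with heq | hlt
      · -- p i' = q i' : trivial step
        have htt : t (i + 1) = t i := by
          rw [htdef]
          simp only
          congr 1
          rw [hsumstep i him, ← hi'def, ← heq]
          ring
        have hPP : P (i + 1) = P i := by
          funext k
          rw [hPdef]
          simp only
          rcases eq_or_ne (k : ℕ) i with hk | hk
          · have hkk : k = i' := Fin.ext hk
            subst hkk
            simp only [hk, Nat.lt_succ_self, lt_irrefl, if_true, if_false]
            exact heq.symm
          · congr 1
            simp only [eq_iff_iff]
            omega
        rw [htt, hPP]
        exact ih hile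
      · -- genuine step
        intro n x
        have hstep := bayart_step T (t i) (t (i + 1)) (P i) i' (q i')
          (by rw [htdef]; exact inv_pos.2 (hσpos i))
          (hP1 i)
          (by rw [hPii']; exact hlt)
          (by rw [h1t, h1t, hsumstep i him, hPii'])
          (by rw [h1t]; exact hσpos (i + 1))
          C hC (ih hile) n x
        rwa [hPsucc] at hstep
  refine ⟨C, hC, fun n x => ?_⟩
  have htm : t m = s := by
    rw [htdef]
    simp only
    rw [hσm, one_div, inv_inv]
  have hPm : P m = q := by
    funext k
    rw [hPdef]
    simp [k.2]
  have := main m le_rfl n x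
  rwa [htm, hPm] at this
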